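/- Let Q be a countable quasi-order that is thick. Then for every binary relation Φ ⊆ Q², at least one of Q equipped with (≤ ∪ Φ) and Q equipped with (≤ ∪ (Q² ∖ Φ)) is thick. -/

import Mathlib

/-- The shift map on sequences. -/
def seqShift {Q : Type*} (X : ℕ → Q) : ℕ → Q := fun k => X (k + 1)

/-- The set `Q⃗` of sequences `X` with `¬ r (X k) (X (k+1))` for all `k`. -/
def vecSet {Q : Type*} (r : Q → Q → Prop) : Set (ℕ → Q) :=
  {X | ∀ k, ¬ r (X k) (X (k + 1))}

/-- The shift graph on a subset `A` of `Qᴺ` (with `Q` discrete, `Qᴺ` carrying the product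
Borel structure) admits a Borel proper 3-colouring. -/
def Colour3 {Q : Type*} (A : Set (ℕ → Q)) : Prop :=
  letI : MeasurableSpace Q := ⊤
  ∃ c : A → Fin 3, Measurable c ∧
    ∀ (X : ℕ → Q) (hX : X ∈ A) (hX' : seqShift X ∈ A),
      c ⟨X, hX⟩ ≠ c ⟨seqShift X, hX'⟩

/-- A relation `r` on `Q` is *thin* if the shift graph on `Q⃗ = vecSet r`
is Borel 3-colourable; otherwise it is *thick*. -/
def IsThin {Q : Type*} (r : Q → Q → Prop) : Prop := Colour3 (vecSet r)

set_option linter.unusedVariables false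
set_option linter.unusedSectionVars false

namespace ThickAux


/-! ### Part 1: from a finite Borel colouring to a Borel 3-colouring, generically -/

section Generic

variable {α : Type*} (T : α → α) (n : ℕ) (c : α → Fin (n + 1))

/-- colour `j` occurs infinitely often along the forward orbit of `x`. -/
def P (x : α) (j : ℕ) : Prop := ∀ N, ∃ m, N ≤ m ∧ (c (T^[m] x) : ℕ) = j

lemma exP (x : α) : ∃ j, P T n c x j := by
  by_contra h
  push_neg at h
  unfold P at h
  push_neg at h
  choose f hf using h
  set M := (Finset.range (n + 1)).sup f with hM
  set j₀ := (c (T^[M] x) : ℕ) with hj₀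
  have hj₀n : j₀ < n + 1 := (c (T^[M] x)).isLt
  have hle : f j₀ ≤ M := Finset.le_sup (Finset.mem_range.mpr hj₀n)
  exact hf j₀ M hle rfl

lemma P_le (x : α) {j : ℕ} (h : P T n c x j) : j ≤ n := by
  obtain ⟨m, -, hm⟩ := h 0
  exact hm ▸ Nat.lt_succ_iff.mp (c (T^[m] x)).isLt

lemma P_shift (x : α) (j : ℕ) : P T n c (T x) j ↔ P T n c x j := by
  constructor
  · intro h N
    obtain ⟨m, hm, hc⟩ := h N
    exact ⟨m + 1, le_trans hm (Nat.le_succ m), by rwa [Function.iterate_succ_apply]⟩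
  · intro h N
    obtain ⟨m, hm, hc⟩ := h (N + 1)
    obtain ⟨m', rfl⟩ : ∃ m', m = m' + 1 := ⟨m - 1, by omega⟩
    exact ⟨m', by omega, by rwa [Function.iterate_succ_apply] at hc⟩

open Classical in
/-- the largest colour occurring infinitely often along the orbit of `x`. -/
noncomputable def idx (x : α) : ℕ := Nat.findGreatest (P T n c x) n

lemma idx_shift (x : α) : idx T n c (T x) = idx T n c x := by
  have : P T n c (T x) = P T n c x := by
    funext j; exact propext (P_shift T n c x j)
  unfold idx
  rw [this]

lemma idx_iterate (m : ℕ) (x : α) : idx T n c (T^[m] x) = idx T n c x := by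
  induction m generalizing x with
  | zero => rfl
  | succ k ih => rw [Function.iterate_succ_apply, ih, idx_shift]

lemma P_idx (x : α) : P T n c x (idx T n c x) := by
  classical
  obtain ⟨j, hj⟩ := exP T n c x
  exact Nat.findGreatest_spec (P_le T n c x hj) hj

/-- the "recurrent independent set". -/
def Bs (x : α) : Prop := (c x : ℕ) = idx T n c x

lemma exBs (x : α) : ∃ m, Bs T n c (T^[m] x) := by
  obtain ⟨m, -, hm⟩ := P_idx T n c x 0
  exact ⟨m, by rw [Bs, idx_iterate, hm]⟩

open Classical in
noncomputable def Nf (x : α) : ℕ := Nat.find (exBs T n c x)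

noncomputable def c3 (x : α) : Fin 3 :=
  if Nf T n c x = 0 then 0 else if Nf T n c x % 2 = 1 then 1 else 2

lemma Bs_not_and {A : Set α} (hcp : ∀ x ∈ A, c x ≠ c (T x)) {x : α} (hx : x ∈ A)
    (h1 : Bs T n c x) (h2 : Bs T n c (T x)) : False := by
  apply hcp x hx
  apply Fin.val_injective
  rw [h1, h2, idx_shift]

lemma Nf_shift {A : Set α} (hcp : ∀ x ∈ A, c x ≠ c (T x)) {x : α} (hx : x ∈ A)
    {m : ℕ} (hm : Nf T n c x = m + 1) : Nf T n c (T x) = m := by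
  classical
  rw [Nf, Nat.find_eq_iff] at hm ⊢
  obtain ⟨hspec, hmin⟩ := hm
  constructor
  · rwa [← Function.iterate_succ_apply]
  · intro k hk
    rw [← Function.iterate_succ_apply]
    exact hmin (k + 1) (by omega)

lemma c3_proper {A : Set α} (hA : ∀ x ∈ A, T x ∈ A) (hcp : ∀ x ∈ A, c x ≠ c (T x)) :
    ∀ x ∈ A, c3 T n c x ≠ c3 T n c (T x) := by
  classical
  intro x hx
  rcases h : Nf T n c x with - | m
  · -- Nf x = 0 : x ∈ Bs, so T x ∉ Bs, hence Nf (T x) ≠ 0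
    have hBx : Bs T n c x := by
      have := Nat.find_spec (exBs T n c x)
      rwa [← Nf, h] at this
    have hBTx : ¬ Bs T n c (T x) := fun hB => Bs_not_and T n c hcp hx hBx hB
    have hNTx : Nf T n c (T x) ≠ 0 := by
      intro h0
      have := Nat.find_spec (exBs T n c (T x))
      rw [← Nf, h0] at this
      exact hBTx this
    unfold c3
    rw [h, if_pos rfl]
    rw [if_neg hNTx]
    split <;> decide
  · have hTx : Nf T n c (T x) = m := Nf_shift T n c hcp hx h
    unfold c3
    rw [h, hTx, if_neg (by omega)]
    rcases Nat.even_or_odd m with he | ho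
    <;> [rw [Nat.even_iff] at he; rw [Nat.odd_iff] at ho]
    · have h1 : (m + 1) % 2 = 1 := by omega
      rw [if_pos h1]
      rcases Nat.eq_zero_or_pos m with rfl | hm
      · rw [if_pos rfl]; decide
      · rw [if_neg (by omega), if_neg (by omega)]; decide
    · have h1 : (m + 1) % 2 ≠ 1 := by omega
      rw [if_neg h1, if_neg (by omega), if_pos (by omega)]
      decide

variable [MeasurableSpace α]

lemma measurable_c3 (hT : Measurable T) (hc : Measurable c) : Measurable (c3 T n c) := by
  classical
  have hval : ∀ m : ℕ, Measurable fun x => (c (T^[m] x) : ℕ) := fun m =>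
    measurable_from_top.comp (hc.comp (hT.iterate m))
  have hPset : ∀ j : ℕ, MeasurableSet {x | P T n c x j} := by
    intro j
    have : {x | P T n c x j} = ⋂ N, ⋃ m, ⋃ (_ : N ≤ m), (fun x => (c (T^[m] x) : ℕ)) ⁻¹' {j} := by
      ext x; simp [P]
    rw [this]
    exact MeasurableSet.iInter fun N => MeasurableSet.iUnion fun m =>
      MeasurableSet.iUnion fun _ => (hval m) (measurableSet_singleton j)
  have hidx : Measurable (idx T n c) := by
    apply measurable_to_countable'
    intro j
    have : (idx T n c) ⁻¹' {j} =
        {x : α | j ≤ n} ∩ ({x : α | j = 0} ∪ {x | P T n c x j}) ∩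
          ⋂ (k : ℕ), ⋂ (_ : j < k), ⋂ (_ : k ≤ n), {x | P T n c x k}ᶜ := by
      ext x
      simp only [Set.mem_preimage, Set.mem_singleton_iff, Set.mem_inter_iff, Set.mem_iInter,
        Set.mem_union, Set.mem_setOf_eq, Set.mem_compl_iff, idx, Nat.findGreatest_eq_iff]
      constructor
      · rintro ⟨h1, h2, h3⟩
        refine ⟨⟨h1, ?_⟩, fun k hk hkn => h3 hk hkn⟩
        by_cases hj : j = 0
        · exact Or.inl hj
        · exact Or.inr (h2 hj)
      · rintro ⟨⟨h1, h2⟩, h3⟩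
        refine ⟨h1, fun hj => ?_, fun k hk hkn => h3 hk hkn⟩
        rcases h2 with h2 | h2
        · exact absurd h2 hj
        · exact h2
    rw [this]
    refine (MeasurableSet.inter (MeasurableSet.inter (MeasurableSet.const _)
      (MeasurableSet.union (MeasurableSet.const _) (hPset j))) ?_)
    exact MeasurableSet.iInter fun k => MeasurableSet.iInter fun _ =>
      MeasurableSet.iInter fun _ => (hPset k).compl
  have hBset : MeasurableSet {x | Bs T n c x} := by
    have : {x | Bs T n c x} = ⋃ j : ℕ,
        ((fun x => (c x : ℕ)) ⁻¹' {j} ∩ (idx T n c) ⁻¹' {j}) := by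
      ext x; simp only [Set.mem_setOf_eq, Bs, Set.mem_iUnion, Set.mem_inter_iff,
        Set.mem_preimage, Set.mem_singleton_iff]
      exact ⟨fun h => ⟨_, rfl, h.symm⟩, fun ⟨j, h1, h2⟩ => h1.trans h2.symm⟩
    rw [this]
    exact MeasurableSet.iUnion fun j => ((measurable_from_top.comp hc)
      (measurableSet_singleton j)).inter (hidx (measurableSet_singleton j))
  have hNf : Measurable (Nf T n c) := by
    apply measurable_to_countable'
    intro m
    have : (Nf T n c) ⁻¹' {m} = ((T^[m]) ⁻¹' {x | Bs T n c x}) ∩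
        ⋂ (k : ℕ), ⋂ (_ : k < m), ((T^[k]) ⁻¹' {x | Bs T n c x})ᶜ := by
      ext x
      simp only [Set.mem_preimage, Set.mem_singleton_iff, Nf, Nat.find_eq_iff,
        Set.mem_inter_iff, Set.mem_iInter, Set.mem_compl_iff, Set.mem_setOf_eq]
    rw [this]
    exact ((hT.iterate m) hBset).inter (MeasurableSet.iInter fun k =>
      MeasurableSet.iInter fun _ => ((hT.iterate k) hBset).compl)
  unfold c3
  apply Measurable.ite
  · exact hNf (measurableSet_singleton 0)
  · exact measurable_const
  · apply Measurable.ite _ measurable_const measurable_const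
    exact hNf ((Set.to_countable {k : ℕ | k % 2 = 1}).measurableSet)

end Generic



section Shift

variable {Q : Type*}

lemma seqShift_mem {r : Q → Q → Prop} {X : ℕ → Q} (h : X ∈ vecSet r) :
    seqShift X ∈ vecSet r := fun k => h (k + 1)

/-- the `Φ`-type of the `k`-th edge of `X`. -/
def tPhi (Φ : Q → Q → Prop) (X : ℕ → Q) (k : ℕ) : Prop := Φ (X k) (X (k + 1))

/-- the `k`-th edge has a different type from the `0`-th one. -/
def Ch (Φ : Q → Q → Prop) (X : ℕ → Q) (k : ℕ) : Prop := ¬ (tPhi Φ X k ↔ tPhi Φ X 0)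

noncomputable def nCh (Φ : Q → Q → Prop) (X : ℕ → Q) : ℕ := sInf {k | Ch Φ X k}

open Classical in
noncomputable def mix (Φ : Q → Q → Prop) (X : ℕ → Q) : Fin 7 :=
  if tPhi Φ X 0 then (if nCh Φ X % 2 = 0 then 5 else 6)
  else (if nCh Φ X % 2 = 0 then 3 else 4)

open Classical in
noncomputable def c7 (r Φ : Q → Q → Prop)
    (c₁ : (vecSet fun p q => r p q ∨ Φ p q) → Fin 3)
    (c₂ : (vecSet fun p q => r p q ∨ ¬ Φ p q) → Fin 3) (X : ℕ → Q) : Fin 7 :=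
  if h : X ∈ vecSet (fun p q => r p q ∨ Φ p q) then
    Fin.castLE (by norm_num) (c₁ ⟨X, h⟩)
  else if h : X ∈ vecSet (fun p q => r p q ∨ ¬ Φ p q) then
    Fin.castLE (by norm_num) (c₂ ⟨X, h⟩)
  else mix Φ X

variable {r Φ : Q → Q → Prop} {X : ℕ → Q}

lemma v1_not_tPhi (h : X ∈ vecSet (fun p q => r p q ∨ Φ p q)) : ∀ k, ¬ tPhi Φ X k :=
  fun k hφ => h k (Or.inr hφ)

lemma v2_tPhi (h : X ∈ vecSet (fun p q => r p q ∨ ¬ Φ p q)) : ∀ k, tPhi Φ X k :=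
  fun k => not_not.mp (fun hn => h k (Or.inr hn))

lemma v1_of (hX : X ∈ vecSet r) (h : ∀ k, ¬ tPhi Φ X k) :
    X ∈ vecSet (fun p q => r p q ∨ Φ p q) :=
  fun k hor => hor.elim (hX k) (h k)

lemma v2_of (hX : X ∈ vecSet r) (h : ∀ k, tPhi Φ X k) :
    X ∈ vecSet (fun p q => r p q ∨ ¬ Φ p q) :=
  fun k hor => hor.elim (hX k) (fun hn => hn (h k))

lemma exCh (hX : X ∈ vecSet r) (h1 : X ∉ vecSet (fun p q => r p q ∨ Φ p q))
    (h2 : X ∉ vecSet (fun p q => r p q ∨ ¬ Φ p q)) : ∃ k, Ch Φ X k := by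
  have e1 : ∃ k, tPhi Φ X k := by
    by_contra h; push_neg at h; exact h1 (v1_of hX h)
  have e2 : ∃ k, ¬ tPhi Φ X k := by
    by_contra h; push_neg at h; exact h2 (v2_of hX h)
  by_cases h0 : tPhi Φ X 0
  · obtain ⟨k, hk⟩ := e2; exact ⟨k, fun hiff => hk (hiff.mpr h0)⟩
  · obtain ⟨k, hk⟩ := e1; exact ⟨k, fun hiff => h0 (hiff.mp hk)⟩

lemma nCh_pos (hEx : ∃ k, Ch Φ X k) : 1 ≤ nCh Φ X := by
  by_contra h
  push_neg at h
  have h0 : nCh Φ X = 0 := by omega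
  have hmem : Ch Φ X (nCh Φ X) := Nat.sInf_mem hEx
  rw [h0] at hmem
  exact hmem Iff.rfl

lemma mix_val_ge (Φ : Q → Q → Prop) (X : ℕ → Q) : 3 ≤ (mix Φ X : ℕ) := by
  unfold mix
  split <;> split <;> decide

lemma c7_proper
    (c₁ : (vecSet fun p q => r p q ∨ Φ p q) → Fin 3)
    (c₂ : (vecSet fun p q => r p q ∨ ¬ Φ p q) → Fin 3)
    (hp₁ : ∀ (X : ℕ → Q) (hX : X ∈ vecSet fun p q => r p q ∨ Φ p q)
      (hX' : seqShift X ∈ vecSet fun p q => r p q ∨ Φ p q),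
      c₁ ⟨X, hX⟩ ≠ c₁ ⟨seqShift X, hX'⟩)
    (hp₂ : ∀ (X : ℕ → Q) (hX : X ∈ vecSet fun p q => r p q ∨ ¬ Φ p q)
      (hX' : seqShift X ∈ vecSet fun p q => r p q ∨ ¬ Φ p q),
      c₂ ⟨X, hX⟩ ≠ c₂ ⟨seqShift X, hX'⟩) :
    ∀ X ∈ vecSet r, c7 r Φ c₁ c₂ X ≠ c7 r Φ c₁ c₂ (seqShift X) := by
  intro X hX
  by_cases hX1 : X ∈ vecSet (fun p q => r p q ∨ Φ p q)
  · have hY1 : seqShift X ∈ vecSet (fun p q => r p q ∨ Φ p q) := seqShift_mem hX1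
    rw [c7, c7, dif_pos hX1, dif_pos hY1]
    intro hEq
    exact hp₁ X hX1 hY1 (Fin.castLE_injective _ hEq)
  by_cases hX2 : X ∈ vecSet (fun p q => r p q ∨ ¬ Φ p q)
  · have hY2 : seqShift X ∈ vecSet (fun p q => r p q ∨ ¬ Φ p q) := seqShift_mem hX2
    have hY1 : seqShift X ∉ vecSet (fun p q => r p q ∨ Φ p q) := by
      intro hY1
      exact v1_not_tPhi hY1 0 (v2_tPhi hX2 1)
    rw [c7, c7, dif_neg hX1, dif_pos hX2, dif_neg hY1, dif_pos hY2]
    intro hEq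
    exact hp₂ X hX2 hY2 (Fin.castLE_injective _ hEq)
  -- X is mixed
  have hEx : ∃ k, Ch Φ X k := exCh hX hX1 hX2
  have hfind : Ch Φ X (nCh Φ X) := Nat.sInf_mem hEx
  have hmin : ∀ k < nCh Φ X, ¬ Ch Φ X k := fun k hk => Nat.notMem_of_lt_sInf hk
  have hn1 : 1 ≤ nCh Φ X := nCh_pos hEx
  rw [c7, c7, dif_neg hX1, dif_neg hX2]
  by_cases hY1 : seqShift X ∈ vecSet (fun p q => r p q ∨ Φ p q)
  · rw [dif_pos hY1]
    intro hEq
    have h1 := mix_val_ge Φ X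
    have h2 : ((Fin.castLE (show 3 ≤ 7 by norm_num) (c₁ ⟨seqShift X, hY1⟩)) : ℕ) < 3 :=
      (c₁ ⟨seqShift X, hY1⟩).isLt
    rw [hEq] at h1
    omega
  by_cases hY2 : seqShift X ∈ vecSet (fun p q => r p q ∨ ¬ Φ p q)
  · rw [dif_neg hY1, dif_pos hY2]
    intro hEq
    have h1 := mix_val_ge Φ X
    have h2 : ((Fin.castLE (show 3 ≤ 7 by norm_num) (c₂ ⟨seqShift X, hY2⟩)) : ℕ) < 3 :=
      (c₂ ⟨seqShift X, hY2⟩).isLt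
    rw [hEq] at h1
    omega
  rw [dif_neg hY1, dif_neg hY2]
  -- both mixed; compare `mix` values
  by_cases hc2 : 2 ≤ nCh Φ X
  · -- type of edge 1 agrees with edge 0
    have hiff : tPhi Φ X 1 ↔ tPhi Φ X 0 := not_not.mp (hmin 1 (by omega))
    have ChY : ∀ k, Ch Φ (seqShift X) k ↔ Ch Φ X (k + 1) := by
      intro k
      show ¬(tPhi Φ X (k + 1) ↔ tPhi Φ X 1) ↔ ¬(tPhi Φ X (k + 1) ↔ tPhi Φ X 0)
      constructor
      · exact fun h h' => h (h'.trans hiff.symm)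
      · exact fun h h' => h (h'.trans hiff)
    have hmem : Ch Φ (seqShift X) (nCh Φ X - 1) := by
      rw [ChY]
      have hsucc : nCh Φ X - 1 + 1 = nCh Φ X := by omega
      rw [hsucc]
      exact hfind
    have hnY : nCh Φ (seqShift X) = nCh Φ X - 1 := by
      apply le_antisymm
      · exact Nat.sInf_le hmem
      · by_contra hlt
        push_neg at hlt
        have hne : {k | Ch Φ (seqShift X) k}.Nonempty := ⟨nCh Φ X - 1, hmem⟩
        have hm := Nat.sInf_mem hne
        rw [Set.mem_setOf_eq, ← nCh] at hm
        rw [ChY] at hm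
        exact hmin _ (by omega) hm
    have hpar : nCh Φ (seqShift X) % 2 ≠ nCh Φ X % 2 := by omega
    by_cases h0 : tPhi Φ X 0
    · have hY0 : tPhi Φ (seqShift X) 0 := hiff.mpr h0
      rw [mix, mix, if_pos h0, if_pos hY0]
      by_cases he : nCh Φ X % 2 = 0
      · rw [if_pos he, if_neg (by omega)]; decide
      · rw [if_neg he, if_pos (by omega)]; decide
    · have hY0 : ¬ tPhi Φ (seqShift X) 0 := fun h => h0 (hiff.mp h)
      rw [mix, mix, if_neg h0, if_neg hY0]
      by_cases he : nCh Φ X % 2 = 0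
      · rw [if_pos he, if_neg (by omega)]; decide
      · rw [if_neg he, if_pos (by omega)]; decide
  · -- nCh Φ X = 1 : the type of edge 1 differs from edge 0
    have h1 : nCh Φ X = 1 := by omega
    have hCh1 : Ch Φ X 1 := by rw [← h1]; exact hfind
    by_cases h0 : tPhi Φ X 0
    · have hY0 : ¬ tPhi Φ (seqShift X) 0 := by
        intro h
        exact hCh1 (iff_of_true h h0)
      rw [mix, mix, if_pos h0, if_neg hY0]
      split <;> split <;> decide
    · have hY0 : tPhi Φ (seqShift X) 0 := by
        by_contra h
        exact hCh1 (iff_of_false h h0)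
      rw [mix, mix, if_neg h0, if_pos hY0]
      split <;> split <;> decide

variable [Countable Q] [MeasurableSpace Q] [MeasurableSingletonClass Q]

lemma measurable_seqShift : Measurable (seqShift : (ℕ → Q) → (ℕ → Q)) :=
  measurable_pi_lambda _ fun k => measurable_pi_apply (k + 1)

lemma measurableSet_pair (P : Q → Q → Prop) (k l : ℕ) :
    MeasurableSet {X : ℕ → Q | P (X k) (X l)} := by
  have h : {X : ℕ → Q | P (X k) (X l)} =
      (fun X : ℕ → Q => (X k, X l)) ⁻¹' {p : Q × Q | P p.1 p.2} := rfl
  rw [h]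
  exact ((measurable_pi_apply k).prodMk (measurable_pi_apply l))
    ((Set.to_countable _).measurableSet)

lemma measurableSet_vecSet (r : Q → Q → Prop) : MeasurableSet (vecSet r) := by
  have h : vecSet r = ⋂ k, {X : ℕ → Q | r (X k) (X (k + 1))}ᶜ := by
    ext X; simp [vecSet]
  rw [h]
  exact MeasurableSet.iInter fun k => (measurableSet_pair r k (k + 1)).compl

lemma measurableSet_Ch (Φ : Q → Q → Prop) (k : ℕ) : MeasurableSet {X : ℕ → Q | Ch Φ X k} := by
  have h : {X : ℕ → Q | Ch Φ X k} =
      ({X : ℕ → Q | tPhi Φ X k} ∩ {X : ℕ → Q | tPhi Φ X 0}ᶜ) ∪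
      ({X : ℕ → Q | tPhi Φ X k}ᶜ ∩ {X : ℕ → Q | tPhi Φ X 0}) := by
    ext X
    simp only [Set.mem_setOf_eq, Set.mem_union, Set.mem_inter_iff, Set.mem_compl_iff, Ch]
    tauto
  rw [h]
  exact ((measurableSet_pair Φ k (k + 1)).inter (measurableSet_pair Φ 0 1).compl).union
    ((measurableSet_pair Φ k (k + 1)).compl.inter (measurableSet_pair Φ 0 1))

lemma measurable_nCh (Φ : Q → Q → Prop) : Measurable (nCh Φ : (ℕ → Q) → ℕ) := by
  apply measurable_to_countable'
  intro m
  have h : (nCh Φ : (ℕ → Q) → ℕ) ⁻¹' {m} =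
      ({X : ℕ → Q | Ch Φ X m} ∩ ⋂ k, ⋂ (_ : k < m), {X : ℕ → Q | Ch Φ X k}ᶜ) ∪
      ((⋂ k, {X : ℕ → Q | Ch Φ X k}ᶜ) ∩ {_X : ℕ → Q | m = 0}) := by
    ext X
    simp only [Set.mem_preimage, Set.mem_singleton_iff, Set.mem_union, Set.mem_inter_iff,
      Set.mem_iInter, Set.mem_compl_iff, Set.mem_setOf_eq]
    constructor
    · intro h
      by_cases hne : ∃ k, Ch Φ X k
      · left
        constructor
        · rw [← h]; exact Nat.sInf_mem hne
        · intro k hk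
          rw [← h] at hk
          exact Nat.notMem_of_lt_sInf hk
      · push_neg at hne
        right
        refine ⟨hne, ?_⟩
        rw [← h, nCh]
        have hempty : {k | Ch Φ X k} = ∅ := by
          ext k; simp only [Set.mem_setOf_eq, Set.mem_empty_iff_false, iff_false]; exact hne k
        rw [hempty, Nat.sInf_empty]
    · rintro (⟨hm, hlt⟩ | ⟨hall, hm0⟩)
      · apply le_antisymm
        · exact Nat.sInf_le hm
        · by_contra hc
          push_neg at hc
          have := Nat.sInf_mem (⟨m, hm⟩ : {k | Ch Φ X k}.Nonempty)
          exact hlt _ hc this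
      · rw [nCh]
        have hempty : {k | Ch Φ X k} = ∅ := by
          ext k; simp only [Set.mem_setOf_eq, Set.mem_empty_iff_false, iff_false]; exact hall k
        rw [hempty, Nat.sInf_empty, hm0]
  rw [h]
  exact ((measurableSet_Ch Φ m).inter (MeasurableSet.iInter fun k =>
      MeasurableSet.iInter fun _ => (measurableSet_Ch Φ k).compl)).union
    ((MeasurableSet.iInter fun k => (measurableSet_Ch Φ k).compl).inter (MeasurableSet.const _))

lemma measurable_mix (Φ : Q → Q → Prop) : Measurable (mix Φ : (ℕ → Q) → Fin 7) := by
  classical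
  unfold mix
  have hpar : MeasurableSet {X : ℕ → Q | nCh Φ X % 2 = 0} :=
    measurable_nCh Φ ((Set.to_countable {k : ℕ | k % 2 = 0}).measurableSet)
  exact Measurable.ite (measurableSet_pair Φ 0 1)
    (Measurable.ite hpar measurable_const measurable_const)
    (Measurable.ite hpar measurable_const measurable_const)

lemma measurable_c7 (r Φ : Q → Q → Prop)
    {c₁ : (vecSet fun p q => r p q ∨ Φ p q) → Fin 3}
    {c₂ : (vecSet fun p q => r p q ∨ ¬ Φ p q) → Fin 3}
    (hc₁ : Measurable c₁) (hc₂ : Measurable c₂) :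
    Measurable (c7 r Φ c₁ c₂) := by
  classical
  unfold c7
  have hcast : Measurable (Fin.castLE (show (3:ℕ) ≤ 7 by norm_num)) :=
    measurable_from_top
  have hf1 : Measurable (fun y : (vecSet fun p q => r p q ∨ Φ p q) =>
      Fin.castLE (show (3:ℕ) ≤ 7 by norm_num) (c₁ y)) := hcast.comp hc₁
  have hf2 : Measurable (fun y : (vecSet fun p q => r p q ∨ ¬ Φ p q) =>
      Fin.castLE (show (3:ℕ) ≤ 7 by norm_num) (c₂ y)) := hcast.comp hc₂
  have inner : Measurable (fun X : ℕ → Q =>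
      if h : X ∈ vecSet (fun p q => r p q ∨ ¬ Φ p q) then
        Fin.castLE (show (3:ℕ) ≤ 7 by norm_num) (c₂ ⟨X, h⟩)
      else mix Φ X) :=
    Measurable.dite hf2 ((measurable_mix Φ).comp measurable_subtype_coe)
      (measurableSet_vecSet _)
  exact Measurable.dite hf1 (inner.comp measurable_subtype_coe) (measurableSet_vecSet _)

end Shift

end ThickAux

lemma isThin_of {Q : Type*} [Countable Q] (r Φ : Q → Q → Prop)
    (h₁ : IsThin (fun p q => r p q ∨ Φ p q))
    (h₂ : IsThin (fun p q => r p q ∨ ¬ Φ p q)) : IsThin r := by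
  letI : MeasurableSpace Q := ⊤
  haveI : MeasurableSingletonClass Q := ⟨fun _ => trivial⟩
  obtain ⟨c₁, hm₁, hp₁⟩ := h₁
  obtain ⟨c₂, hm₂, hp₂⟩ := h₂
  have hc7m : Measurable (ThickAux.c7 r Φ c₁ c₂) := ThickAux.measurable_c7 r Φ hm₁ hm₂
  have hc7p := ThickAux.c7_proper c₁ c₂ hp₁ hp₂
  refine ⟨fun a => ThickAux.c3 seqShift 6 (ThickAux.c7 r Φ c₁ c₂) a.val, ?_, ?_⟩
  · exact (ThickAux.measurable_c3 seqShift 6 _ ThickAux.measurable_seqShift hc7m).comp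
      measurable_subtype_coe
  · intro X hX hX'
    exact ThickAux.c3_proper seqShift 6 (ThickAux.c7 r Φ c₁ c₂)
      (fun x hx => ThickAux.seqShift_mem hx) hc7p X hX

/-- If `Q` is thick, then for every binary relation `Φ` on `Q`, at least one of
`(≤ ∪ Φ)` and `(≤ ∪ ¬Φ)` is thick. -/
theorem thick_or_compl {Q : Type*} [Countable Q]
    (r : Q → Q → Prop) (hr : Reflexive r) (ht : Transitive r)
    (hthick : ¬ IsThin r) (Φ : Q → Q → Prop) :
    ¬ IsThin (fun p q => r p q ∨ Φ p q) ∨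
    ¬ IsThin (fun p q => r p q ∨ ¬ Φ p q) := by
  by_contra h
  push_neg at h
  obtain ⟨h₁, h₂⟩ := h
  exact hthick (isThin_of r Φ h₁ h₂)
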